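/- Let Γ be a modular complex and p,q vertices. (a) If p∧q exists then (p, p∧q, q) is a shortest subpath; conversely, if x ⪯ p, x ⪯ q and (p,x,q) is a shortest subpath, then p∧q exists and x = p∧q. (b) If p∨q exists then (p, p∨q, q) is a shortest subpath; conversely, if p ⪯ x, q ⪯ x and (p,x,q) is a shortest subpath, then p∨q exists and x = p∨q. -/

import Mathlib

namespace ZeroExt

variable {V : Type*}

/-- The metric interval `I(x,y)` in a graph. -/
def interval (G : SimpleGraph V) (x y : V) : Set V :=
  {z | G.dist x z + G.dist z y = G.dist x y}

/-- `m` is a median of `x, y, z`. -/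
def IsMedian (G : SimpleGraph V) (x y z m : V) : Prop :=
  m ∈ interval G x y ∧ m ∈ interval G y z ∧ m ∈ interval G x z

/-- A graph is modular if every triple of vertices has a median. -/
def Modular (G : SimpleGraph V) : Prop :=
  ∀ x y z : V, ∃ m : V, IsMedian G x y z m

/-- `(a,b,c)` is a shortest subpath. -/
def ShortestTriple (G : SimpleGraph V) (a b c : V) : Prop :=
  G.dist a b + G.dist b c = G.dist a c

/-- `(a,b,c,d)` is a shortest subpath. -/
def ShortestQuad (G : SimpleGraph V) (a b c d : V) : Prop :=
  G.dist a b + G.dist b c + G.dist c d = G.dist a d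

/-- `(x1,x2,x3,x4)` is an isometric rectangle. -/
def IsoRect (G : SimpleGraph V) (x1 x2 x3 x4 : V) : Prop :=
  ShortestTriple G x4 x1 x2 ∧ ShortestTriple G x1 x2 x3 ∧
    ShortestTriple G x2 x3 x4 ∧ ShortestTriple G x3 x4 x1

/-- A set of vertices is convex if it contains the interval of each pair of its points. -/
def Convex (G : SimpleGraph V) (U : Set V) : Prop :=
  ∀ x ∈ U, ∀ y ∈ U, interval G x y ⊆ U

/-- `g` is a gate of `q` at `U`. -/
def IsGate (G : SimpleGraph V) (U : Set V) (q g : V) : Prop :=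
  g ∈ U ∧ ∀ u ∈ U, G.dist q u = G.dist q g + G.dist g u

/-- A 4-cycle in a graph. -/
def IsFourCycle (G : SimpleGraph V) (x1 x2 x3 x4 : V) : Prop :=
  G.Adj x1 x2 ∧ G.Adj x2 x3 ∧ G.Adj x3 x4 ∧ G.Adj x4 x1 ∧ x1 ≠ x3 ∧ x2 ≠ x4

/-- A modular complex: a finite connected modular graph together with an
acyclic admissible edge orientation. -/
structure ModularComplex (V : Type*) [Fintype V] where
  G : SimpleGraph V
  connected : G.Connected
  modular : Modular G
  ori : V → V → Prop
  ori_adj : ∀ {x y : V}, ori x y → G.Adj x y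
  ori_total : ∀ {x y : V}, G.Adj x y → ori x y ∨ ori y x
  acyclic : ∀ {x y : V}, Relation.ReflTransGen ori x y → Relation.ReflTransGen ori y x → x = y
  admissible : ∀ {x1 x2 x3 x4 : V}, IsFourCycle G x1 x2 x3 x4 → ori x1 x2 → ori x4 x3

variable [Fintype V]

/-- The partial order `⪯` induced by the orientation. -/
def ModularComplex.le (Γ : ModularComplex V) : V → V → Prop :=
  Relation.ReflTransGen Γ.ori

/-- The order interval `[p,q]`. -/
def ModularComplex.Icc (Γ : ModularComplex V) (p q : V) : Set V :=
  {x | Γ.le p x ∧ Γ.le x q}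

/-- `m` is the greatest lower bound `p ∧ q`. -/
def ModularComplex.IsMeet (Γ : ModularComplex V) (p q m : V) : Prop :=
  Γ.le m p ∧ Γ.le m q ∧ ∀ x : V, Γ.le x p → Γ.le x q → Γ.le x m

/-- `j` is the least upper bound `p ∨ q`. -/
def ModularComplex.IsJoin (Γ : ModularComplex V) (p q j : V) : Prop :=
  Γ.le p j ∧ Γ.le q j ∧ ∀ x : V, Γ.le p x → Γ.le q x → Γ.le j x

/-- `(p,q)` is a Boolean pair. -/
def ModularComplex.BooleanPair (Γ : ModularComplex V) (p q : V) : Prop :=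
  ∃ (k : ℕ) (φ : Finset (Fin k) → V), Function.Injective φ ∧
    φ ∅ = p ∧ φ Finset.univ = q ∧
    ∀ (S : Finset (Fin k)) (i : Fin k), i ∉ S → Γ.ori (φ S) (φ (insert i S))

/-- An extended modular complex: a modular complex with an admissible relation `⊑`. -/
structure ExtendedModularComplex (V : Type*) [Fintype V] extends ModularComplex V where
  sq : V → V → Prop
  sq_le : ∀ {p q : V}, sq p q → toModularComplex.le p q
  sq_refl : ∀ p : V, sq p p
  sq_edge : ∀ {p q : V}, ori p q → sq p q
  sq_interval : ∀ {p q a b : V}, sq p q → toModularComplex.le a b →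
    a ∈ toModularComplex.Icc p q → b ∈ toModularComplex.Icc p q → sq a b
  sq_join : ∀ {p q1 q2 j : V}, sq p q1 → sq p q2 → toModularComplex.IsJoin q1 q2 j → sq p j
  sq_meet : ∀ {p1 p2 q m : V}, sq p1 q → sq p2 q → toModularComplex.IsMeet p1 p2 m → sq m q

/-- `L^+_p = {x : p ⊑ x}`. -/
def ExtendedModularComplex.Lpos (Γ : ExtendedModularComplex V) (p : V) : Set V :=
  {x | Γ.sq p x}

/-- `L^-_p = {x : x ⊑ p}`. -/
def ExtendedModularComplex.Lneg (Γ : ExtendedModularComplex V) (p : V) : Set V :=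
  {x | Γ.sq x p}

/-- `p, q` are ◇-neighbors. -/
def ExtendedModularComplex.DiamondNb (Γ : ExtendedModularComplex V) (p q : V) : Prop :=
  ∃ a b : V, Γ.sq a b ∧ p ∈ Γ.Icc a b ∧ q ∈ Γ.Icc a b

/-- The thickening `Δ(Γ)`. -/
def ExtendedModularComplex.thick (Γ : ExtendedModularComplex V) : SimpleGraph V where
  Adj p q := p ≠ q ∧ Γ.DiamondNb p q
  symm := by
    constructor
    rintro p q ⟨hne, a, b, hab, hp, hq⟩
    exact ⟨hne.symm, a, b, hab, hq, hp⟩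
  loopless := by constructor; rintro p ⟨hne, -⟩; exact hne rfl


section Auxiliary

open SimpleGraph

variable {Γ : ModularComplex V}

private lemma ModularComplex.dist_zero {x y : V} (Γ : ModularComplex V)
    (h : Γ.G.dist x y = 0) : x = y :=
  (Γ.connected.dist_eq_zero_iff).mp h

private lemma ModularComplex.adj_dist {x y : V} (Γ : ModularComplex V)
    (h : Γ.G.Adj x y) : Γ.G.dist x y = 1 :=
  SimpleGraph.dist_eq_one_iff_adj.mpr h

/-- A destructured form of modularity. -/
private lemma ModularComplex.med (Γ : ModularComplex V) (x y z : V) :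
    ∃ m : V, Γ.G.dist x m + Γ.G.dist m y = Γ.G.dist x y ∧
      Γ.G.dist y m + Γ.G.dist m z = Γ.G.dist y z ∧
      Γ.G.dist x m + Γ.G.dist m z = Γ.G.dist x z := by
  obtain ⟨m, h1, h2, h3⟩ := Γ.modular x y z
  exact ⟨m, h1, h2, h3⟩

/-- Modular graphs are "bipartite-like": distances to the ends of an edge differ by one. -/
private lemma ModularComplex.adj_cases (Γ : ModularComplex V) {x y : V}
    (h : Γ.G.Adj x y) (z : V) :
    Γ.G.dist z y = Γ.G.dist z x + 1 ∨ Γ.G.dist z x = Γ.G.dist z y + 1 := by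
  obtain ⟨m, h1, h2, h3⟩ := Γ.med x y z
  have hxy : Γ.G.dist x y = 1 := Γ.adj_dist h
  rw [hxy] at h1
  have c1 := SimpleGraph.dist_comm (G := Γ.G) (u := x) (v := y)
  have c2 := SimpleGraph.dist_comm (G := Γ.G) (u := z) (v := y)
  have c3 := SimpleGraph.dist_comm (G := Γ.G) (u := z) (v := x)
  rcases Nat.eq_zero_or_pos (Γ.G.dist x m) with h0 | hpos
  · -- m = x
    have hmx : m = x := (Γ.dist_zero h0).symm
    rw [hmx] at h2
    left
    omega
  · -- m = y
    have hmy : m = y := Γ.dist_zero (by omega)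
    rw [hmy] at h3
    right
    omega

/-- The quadrangle condition in modular graphs. -/
private lemma ModularComplex.quad (Γ : ModularComplex V) {x u v z : V}
    (hu : Γ.G.Adj u z) (hv : Γ.G.Adj v z) (huv : u ≠ v)
    (hdu : Γ.G.dist x u + 1 = Γ.G.dist x z) (hdv : Γ.G.dist x v + 1 = Γ.G.dist x z) :
    ∃ w : V, Γ.G.Adj u w ∧ Γ.G.Adj v w ∧ Γ.G.dist x w + 1 = Γ.G.dist x u ∧ w ≠ z := by
  have hnadj : ¬ Γ.G.Adj u v := by
    intro hadj
    rcases Γ.adj_cases hadj x with h | h <;> omega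
  have hd2 : Γ.G.dist u v = 2 := by
    have ht : Γ.G.dist u v ≤ Γ.G.dist u z + Γ.G.dist z v := Γ.connected.dist_triangle
    have h1 : Γ.G.dist u z = 1 := Γ.adj_dist hu
    have h2 : Γ.G.dist z v = 1 := Γ.adj_dist hv.symm
    have hne0 : Γ.G.dist u v ≠ 0 := fun h0 => huv (Γ.dist_zero h0)
    have hne1 : Γ.G.dist u v ≠ 1 := fun h1 =>
      hnadj (SimpleGraph.dist_eq_one_iff_adj.mp h1)
    omega
  obtain ⟨m, h1, h2, h3⟩ := Γ.med x u v
  obtain ⟨m2, g1, g2, g3⟩ := Γ.med u v m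
  clear g1 g2 g3
  rw [hd2] at h2
  have hum : Γ.G.dist u m ≠ 0 := by
    intro h0
    have heq : m = u := (Γ.dist_zero h0).symm
    rw [heq] at h3
    omega
  have hmv : Γ.G.dist m v ≠ 0 := by
    intro h0
    have heq : m = v := Γ.dist_zero h0
    rw [heq] at h1
    have cvu := SimpleGraph.dist_comm (G := Γ.G) (u := v) (v := u)
    omega
  have cum := SimpleGraph.dist_comm (G := Γ.G) (u := u) (v := m)
  have cvm := SimpleGraph.dist_comm (G := Γ.G) (u := v) (v := m)
  have humv : Γ.G.dist u m = 1 ∧ Γ.G.dist m v = 1 := by omega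
  refine ⟨m, SimpleGraph.dist_eq_one_iff_adj.mp humv.1, ?_, by omega, ?_⟩
  · exact SimpleGraph.dist_eq_one_iff_adj.mp (by omega)
  · intro hmz
    subst hmz
    omega

/-- A directed path of length `n`. -/
private def DPath (Γ : ModularComplex V) (n : ℕ) (u : ℕ → V) : Prop :=
  ∀ i < n, Γ.ori (u i) (u (i + 1))

private lemma ModularComplex.dpath_le (Γ : ModularComplex V) :
    ∀ (n : ℕ) (u : ℕ → V), DPath Γ n u → Γ.le (u 0) (u n) := by
  intro n
  induction n with
  | zero => exact fun u _ => Relation.ReflTransGen.refl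
  | succ k ih =>
    intro u hu
    exact Relation.ReflTransGen.tail (ih u fun i hi => hu i (by omega)) (hu k (by omega))

/-- Every directed path in a modular complex is a geodesic. -/
private lemma ModularComplex.dpath_dist (Γ : ModularComplex V) :
    ∀ (n : ℕ) (u : ℕ → V), DPath Γ n u → Γ.G.dist (u 0) (u n) = n := by
  intro n
  induction n using Nat.strong_induction_on with
  | _ n ih =>
  intro u hu
  match n with
  | 0 => simp [SimpleGraph.dist_self]
  | 1 => exact Γ.adj_dist (Γ.ori_adj (hu 0 (by omega)))
  | 2 =>
    have d1 : Γ.G.dist (u 0) (u 1) = 1 :=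
      ih 1 (by omega) u (fun i hi => hu i (by omega))
    have hor : Γ.ori (u 1) (u 2) := hu 1 (by omega)
    rcases Γ.adj_cases (Γ.ori_adj hor) (u 0) with h | h
    · omega
    · exfalso
      have h02 : u 0 = u 2 := Γ.dist_zero (by omega)
      have h01 : Γ.ori (u 0) (u 1) := hu 0 (by omega)
      rw [← h02] at hor
      have : u 0 = u 1 :=
        Γ.acyclic (Relation.ReflTransGen.single h01) (Relation.ReflTransGen.single hor)
      exact (Γ.ori_adj h01).ne this
  | (k + 3) =>
    have d1 : Γ.G.dist (u 0) (u (k + 2)) = k + 2 :=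
      ih (k + 2) (by omega) u (fun i hi => hu i (by omega))
    have d2 : Γ.G.dist (u 0) (u (k + 1)) = k + 1 :=
      ih (k + 1) (by omega) u (fun i hi => hu i (by omega))
    have hor : Γ.ori (u (k + 2)) (u (k + 3)) := hu (k + 2) (by omega)
    have hadj : Γ.G.Adj (u (k + 2)) (u (k + 3)) := Γ.ori_adj hor
    rcases Γ.adj_cases hadj (u 0) with h | h
    · omega
    · -- bad case : dist (u 0) (u (k+3)) = k + 1
      exfalso
      have dlast : Γ.G.dist (u 0) (u (k + 3)) = k + 1 := by omega
      have hork : Γ.ori (u (k + 1)) (u (k + 2)) := hu (k + 1) (by omega)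
      have hne : u (k + 1) ≠ u (k + 3) := by
        intro heq
        rw [heq] at hork
        have : u (k + 2) = u (k + 3) := Γ.acyclic
          (Relation.ReflTransGen.single hor) (Relation.ReflTransGen.single hork)
        exact (Γ.ori_adj hor).ne this
      obtain ⟨w, hw1, hw2, hw3, hw4⟩ := Γ.quad (x := u 0)
        (Γ.ori_adj hork) hadj.symm hne (by omega) (by omega)
      -- four-cycle (u (k+2), u (k+3), w, u (k+1)) : ori u(k+2) u(k+3) ⇒ ori u(k+1) w
      have hnew : Γ.ori (u (k + 1)) w := by
        apply Γ.admissible (x1 := u (k + 2)) (x2 := u (k + 3)) (x3 := w) (x4 := u (k + 1))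
          ?_ hor
        exact ⟨hadj, hw2, hw1.symm, Γ.ori_adj hork, hw4.symm, hne.symm⟩
      have hpath : DPath Γ (k + 2) (Function.update u (k + 2) w) := by
        intro i hi
        rcases Nat.lt_or_ge i (k + 1) with hik | hik
        · rw [Function.update_of_ne (by omega), Function.update_of_ne (by omega)]
          exact hu i (by omega)
        · have : i = k + 1 := by omega
          subst this
          rw [Function.update_of_ne (by omega), Function.update_self]
          exact hnew
      have hfin := ih (k + 2) (by omega) _ hpath
      rw [Function.update_of_ne (by omega), Function.update_self] at hfin
      omega

private lemma ModularComplex.le_dpath {p q : V} (h : Γ.le p q) :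
    ∃ (n : ℕ) (u : ℕ → V), DPath Γ n u ∧ u 0 = p ∧ u n = q := by
  induction h with
  | refl => exact ⟨0, fun _ => p, fun i hi => absurd hi (Nat.not_lt_zero i), rfl, rfl⟩
  | @tail b c hab hbc ih =>
    obtain ⟨n, u, hu, h0, hn⟩ := ih
    refine ⟨n + 1, fun i => if i ≤ n then u i else c, ?_, ?_, ?_⟩
    · intro i hi
      have hin : i ≤ n := by omega
      simp only [hin, if_pos]
      by_cases h1 : i + 1 ≤ n
      · simp only [h1, if_pos]
        exact hu i (by omega)
      · have : i = n := by omega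
        subst this
        simp only [if_neg h1, hn]
        exact hbc
    · simpa using h0
    · simp

/-- If `p ⪯ q` then the distance decomposes along any intermediate comparable point. -/
private lemma ModularComplex.le_dist_add {p q r : V} (hpq : Γ.le p q) (hqr : Γ.le q r) :
    Γ.G.dist p q + Γ.G.dist q r = Γ.G.dist p r := by
  obtain ⟨n, u, hu, hu0, hun⟩ := ModularComplex.le_dpath hpq
  obtain ⟨m, v, hv, hv0, hvm⟩ := ModularComplex.le_dpath hqr
  let w : ℕ → V := fun i => if i < n then u i else v (i - n)
  have hw : ∀ i, w i = if i < n then u i else v (i - n) := fun _ => rfl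
  have hwp : DPath Γ (n + m) w := by
    intro i hi
    rcases Nat.lt_or_ge i n with h1 | h1
    · have e1 : w i = u i := by rw [hw, if_pos h1]
      have e2 : w (i + 1) = u (i + 1) := by
        rcases Nat.lt_or_ge (i + 1) n with h2 | h2
        · rw [hw, if_pos h2]
        · have h3 : i + 1 = n := by omega
          rw [hw, if_neg (by omega)]
          have h4 : i + 1 - n = 0 := by omega
          rw [h4, hv0, ← hun, h3]
      rw [e1, e2]
      exact hu i h1
    · have e1 : w i = v (i - n) := by rw [hw, if_neg (by omega)]
      have e2 : w (i + 1) = v (i - n + 1) := by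
        rw [hw, if_neg (by omega)]
        congr 1
        omega
      rw [e1, e2]
      exact hv (i - n) (by omega)
  have hdw := Γ.dpath_dist (n + m) w hwp
  have hw0 : w 0 = p := by
    rcases Nat.eq_zero_or_pos n with h0 | h0
    · rw [hw, if_neg (by omega)]
      subst h0
      rw [show (0 : ℕ) - 0 = 0 from rfl, hv0, ← hun]
      exact hu0
    · rw [hw, if_pos h0]
      exact hu0
  have hwnm : w (n + m) = r := by
    rw [hw, if_neg (by omega)]
    rw [show n + m - n = m by omega]
    exact hvm
  have hd1 : Γ.G.dist p q = n := by
    have := Γ.dpath_dist n u hu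
    rwa [hu0, hun] at this
  have hd2 : Γ.G.dist q r = m := by
    have := Γ.dpath_dist m v hv
    rwa [hv0, hvm] at this
  rw [hw0, hwnm] at hdw
  omega

/-- First step of a geodesic directed chain. -/
private lemma ModularComplex.head_step {p q : V} (h : Γ.le p q) (hne : p ≠ q) :
    ∃ y : V, Γ.ori p y ∧ Γ.le y q ∧ Γ.G.dist y q + 1 = Γ.G.dist p q := by
  obtain ⟨n, u, hu, h0, hn⟩ := ModularComplex.le_dpath h
  match n with
  | 0 => exact absurd (h0.symm.trans hn) hne
  | (k + 1) =>
    refine ⟨u 1, h0 ▸ hu 0 (by omega), ?_, ?_⟩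
    · have := Γ.dpath_le k (fun i => u (i + 1)) (fun i hi => hu (i + 1) (by omega))
      simpa [hn] using this
    · have h1 := Γ.dpath_dist k (fun i => u (i + 1)) (fun i hi => hu (i + 1) (by omega))
      have h2 := Γ.dpath_dist (k + 1) u hu
      simp only [zero_add, hn] at h1
      rw [h0, hn] at h2
      omega

/-- First step of some geodesic towards `z`. -/
private lemma ModularComplex.step_toward (Γ : ModularComplex V) {x z : V} (h : x ≠ z) :
    ∃ w : V, Γ.G.Adj x w ∧ Γ.G.dist w z + 1 = Γ.G.dist x z := by
  obtain ⟨p, hp⟩ := (Γ.connected x z).exists_walk_length_eq_dist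
  cases p with
  | nil => exact absurd rfl h
  | @cons _ b _ hadj q =>
    refine ⟨b, hadj, ?_⟩
    have h1 : Γ.G.dist b z ≤ q.length := SimpleGraph.dist_le q
    have h2 : Γ.G.dist x z ≤ Γ.G.dist x b + Γ.G.dist b z := Γ.connected.dist_triangle
    have h3 : Γ.G.dist x b = 1 := Γ.adj_dist hadj
    have h4 : q.length + 1 = Γ.G.dist x z := by
      simpa [SimpleGraph.Walk.length_cons] using hp
    omega

/-- Lemma: a geodesic from `x` toward a `⪯`-larger vertex `y` starts with
an up-oriented edge, and stays below `y`. -/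
private lemma ModularComplex.step_up :
    ∀ (nn : ℕ) {x y w : V}, Γ.G.dist x y = nn → Γ.le x y → Γ.G.Adj x w →
      Γ.G.dist w y + 1 = Γ.G.dist x y → Γ.ori x w ∧ Γ.le w y := by
  intro nn
  induction nn using Nat.strong_induction_on with
  | _ nn ih =>
  intro x y w hd hle hadj hw
  have hne : x ≠ y := by
    intro h
    subst h
    rw [SimpleGraph.dist_self] at hw
    omega
  obtain ⟨y1, hori, hley, hy1⟩ := ModularComplex.head_step hle hne
  by_cases hwy : w = y1
  · subst hwy
    exact ⟨hori, hley⟩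
  · have cyx := SimpleGraph.dist_comm (G := Γ.G) (u := y) (v := x)
    have cyy1 := SimpleGraph.dist_comm (G := Γ.G) (u := y) (v := y1)
    have cyw := SimpleGraph.dist_comm (G := Γ.G) (u := y) (v := w)
    obtain ⟨r, hr1, hr2, hr3, hr4⟩ := Γ.quad (x := y) (u := y1) (v := w) (z := x)
      (Γ.ori_adj hori).symm hadj.symm (Ne.symm hwy) (by omega) (by omega)
    have hrec : Γ.ori y1 r ∧ Γ.le r y := by
      have cryy := SimpleGraph.dist_comm (G := Γ.G) (u := y) (v := r)
      have cy1y := SimpleGraph.dist_comm (G := Γ.G) (u := y1) (v := y)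
      have cry := SimpleGraph.dist_comm (G := Γ.G) (u := r) (v := y)
      exact ih (Γ.G.dist y1 y) (by omega) rfl hley hr1 (by omega)
    obtain ⟨hor2, hler⟩ := hrec
    constructor
    · -- four-cycle (y1, r, w, x) : ori y1 r ⇒ ori x w
      apply Γ.admissible (x1 := y1) (x2 := r) (x3 := w) (x4 := x) ?_ hor2
      exact ⟨hr1, hr2.symm, hadj.symm, Γ.ori_adj hori, Ne.symm hwy, hr4⟩
    · -- four-cycle (x, y1, r, w) : ori x y1 ⇒ ori w r
      have horw : Γ.ori w r := by
        apply Γ.admissible (x1 := x) (x2 := y1) (x3 := r) (x4 := w) ?_ hori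
        exact ⟨Γ.ori_adj hori, hr1, hr2.symm, hadj.symm, Ne.symm hr4, Ne.symm hwy⟩
      exact Relation.ReflTransGen.head horw hler

/-- Lemma: metric intervals between comparable points are order intervals. -/
private lemma ModularComplex.interval_le :
    ∀ (k : ℕ) {x y z : V}, Γ.G.dist x z = k → Γ.le x y →
      Γ.G.dist x z + Γ.G.dist z y = Γ.G.dist x y → Γ.le x z ∧ Γ.le z y := by
  intro k
  induction k using Nat.strong_induction_on with
  | _ k ih =>
  intro x y z hd hle hint
  match k with
  | 0 =>
    have : x = z := Γ.dist_zero hd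
    subst this
    exact ⟨Relation.ReflTransGen.refl, hle⟩
  | (k + 1) =>
    have hne : x ≠ z := by
      intro h
      subst h
      rw [SimpleGraph.dist_self] at hd
      omega
    obtain ⟨w, hadj, hwz⟩ := Γ.step_toward hne
    have hw1 : Γ.G.dist x w = 1 := Γ.adj_dist hadj
    have hwy : Γ.G.dist w y + 1 = Γ.G.dist x y := by
      have t1 : Γ.G.dist x y ≤ Γ.G.dist x w + Γ.G.dist w y := Γ.connected.dist_triangle
      have t2 : Γ.G.dist w y ≤ Γ.G.dist w z + Γ.G.dist z y := Γ.connected.dist_triangle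
      omega
    obtain ⟨horxw, hlewy⟩ := ModularComplex.step_up (Γ.G.dist x y) rfl hle hadj hwy
    have hrec : Γ.le w z ∧ Γ.le z y := by
      apply ih k (by omega) (by omega) hlewy
      omega
    exact ⟨Relation.ReflTransGen.head horxw hrec.1, hrec.2⟩

/-- Principal ideals are convex. -/
private lemma ModularComplex.down_convex :
    ∀ (k : ℕ) {p z1 z2 w : V}, Γ.G.dist z1 z2 = k → Γ.le z1 p → Γ.le z2 p →
      Γ.G.dist z1 w + Γ.G.dist w z2 = Γ.G.dist z1 z2 → Γ.le w p := by
  intro k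
  induction k using Nat.strong_induction_on with
  | _ k ih =>
  intro p z1 z2 w hd h1p h2p hint
  by_cases hwz : w = z1
  · subst hwz
    exact h1p
  · have hz1w : Γ.G.dist z1 w ≠ 0 := fun h0 => hwz (Γ.dist_zero h0).symm
    have hkpos : 1 ≤ k := by omega
    obtain ⟨w', hadj, hw'w⟩ := Γ.step_toward (Ne.symm hwz)
    have hw'1 : Γ.G.dist z1 w' = 1 := Γ.adj_dist hadj
    have hw'z2 : Γ.G.dist w' z2 + 1 = k := by
      have t1 : Γ.G.dist z1 z2 ≤ Γ.G.dist z1 w' + Γ.G.dist w' z2 := Γ.connected.dist_triangle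
      have t2 : Γ.G.dist w' z2 ≤ Γ.G.dist w' w + Γ.G.dist w z2 := Γ.connected.dist_triangle
      omega
    -- step 1 : w' is below p
    have hw'p : Γ.le w' p := by
      rcases Γ.ori_total hadj with hor | hor
      · -- hard case : edge goes up from z1
        obtain ⟨m, m1, m2, m3⟩ := Γ.med z1 z2 p
        have hm1 : Γ.le z1 m ∧ Γ.le m p := ModularComplex.interval_le (Γ.G.dist z1 m) rfl h1p m3
        have hm2 : Γ.le z2 m := (ModularComplex.interval_le (Γ.G.dist z2 m) rfl h2p m2).1
        by_cases hmz1 : m = z1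
        · -- z2 ⪯ z1 : use interval_le from z2
          subst hmz1
          have h21 : Γ.le z2 m := hm2
          have : Γ.le z2 w' ∧ Γ.le w' m := by
            apply ModularComplex.interval_le (Γ.G.dist z2 w') rfl h21
            have c1 := SimpleGraph.dist_comm (G := Γ.G) (u := z2) (v := w')
            have c2 := SimpleGraph.dist_comm (G := Γ.G) (u := w') (v := m)
            have c3 := SimpleGraph.dist_comm (G := Γ.G) (u := z2) (v := m)
            omega
          exact this.2.trans h1p
        · have hz1m : z1 ≠ m := Ne.symm hmz1
          obtain ⟨y, hory, hleym, hym⟩ := ModularComplex.head_step hm1.1 hz1m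
          have hy1 : Γ.G.dist z1 y = 1 := Γ.adj_dist (Γ.ori_adj hory)
          have hyz2 : Γ.G.dist y z2 + 1 = k := by
            have t1 : Γ.G.dist z1 z2 ≤ Γ.G.dist z1 y + Γ.G.dist y z2 := Γ.connected.dist_triangle
            have t2 : Γ.G.dist y z2 ≤ Γ.G.dist y m + Γ.G.dist m z2 := Γ.connected.dist_triangle
            have c1 := SimpleGraph.dist_comm (G := Γ.G) (u := m) (v := z2)
            omega
          have hyp : Γ.le y p := hleym.trans hm1.2
          by_cases hyw : y = w'
          · subst hyw
            exact hyp
          · have c1 := SimpleGraph.dist_comm (G := Γ.G) (u := z2) (v := z1)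
            have c2 := SimpleGraph.dist_comm (G := Γ.G) (u := z2) (v := y)
            have c3 := SimpleGraph.dist_comm (G := Γ.G) (u := z2) (v := w')
            obtain ⟨r, hr1, hr2, hr3, hr4⟩ := Γ.quad (x := z2) (u := y) (v := w') (z := z1)
              (Γ.ori_adj hory).symm hadj.symm hyw (by omega) (by omega)
            have hrp : Γ.le r p := by
              apply ih (Γ.G.dist y z2) (by omega) rfl hyp h2p
              have c4 := SimpleGraph.dist_comm (G := Γ.G) (u := z2) (v := r)
              have c5 := SimpleGraph.dist_comm (G := Γ.G) (u := y) (v := r)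
              have hyr : Γ.G.dist y r = 1 := Γ.adj_dist hr1
              omega
            have horw'r : Γ.ori w' r := by
              apply Γ.admissible (x1 := z1) (x2 := y) (x3 := r) (x4 := w') ?_ hory
              exact ⟨Γ.ori_adj hory, hr1, hr2.symm, hadj.symm, Ne.symm hr4, hyw⟩
            exact Relation.ReflTransGen.head horw'r hrp
      · exact Relation.ReflTransGen.head hor h1p
    -- step 2 : recurse from w'
    apply ih (Γ.G.dist w' z2) (by omega) rfl hw'p h2p
    have t1 : Γ.G.dist w' w ≤ Γ.G.dist w' z1 + Γ.G.dist z1 w := Γ.connected.dist_triangle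
    have c1 := SimpleGraph.dist_comm (G := Γ.G) (u := w') (v := z1)
    omega

/-- Part (a), forward direction. -/
private lemma ModularComplex.meet_shortest (Γ : ModularComplex V) {p q m : V}
    (h : Γ.IsMeet p q m) : ShortestTriple Γ.G p m q := by
  obtain ⟨hmp, hmq, hmax⟩ := h
  obtain ⟨z, h1, h2, h3⟩ := Γ.med p m q
  have hz1 : Γ.le m z ∧ Γ.le z p := by
    apply ModularComplex.interval_le (Γ.G.dist m z) rfl hmp
    have c1 := SimpleGraph.dist_comm (G := Γ.G) (u := p) (v := z)
    have c2 := SimpleGraph.dist_comm (G := Γ.G) (u := z) (v := m)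
    have c3 := SimpleGraph.dist_comm (G := Γ.G) (u := p) (v := m)
    omega
  have hz2 : Γ.le m z ∧ Γ.le z q := ModularComplex.interval_le (Γ.G.dist m z) rfl hmq h2
  have hzm : Γ.le z m := hmax z hz1.2 hz2.2
  have : m = z := Γ.acyclic hz1.1 hzm
  subst this
  exact h3

/-- Part (a), converse direction. -/
private lemma ModularComplex.shortest_meet (Γ : ModularComplex V) {p q x : V}
    (hxp : Γ.le x p) (hxq : Γ.le x q) (hsh : ShortestTriple Γ.G p x q) :
    Γ.IsMeet p q x := by
  classical
  obtain ⟨g, hgmem, hgmin⟩ := Finset.exists_min_image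
    (Finset.univ.filter fun u => Γ.le u p ∧ Γ.le u q) (fun u => Γ.G.dist p u)
    ⟨x, by simp [hxp, hxq]⟩
  simp only [Finset.mem_filter, Finset.mem_univ, true_and] at hgmin hgmem
  obtain ⟨hgp, hgq⟩ := hgmem
  -- g is a gate of p in the set of common lower bounds
  have hgate : ∀ u : V, Γ.le u p → Γ.le u q →
      Γ.G.dist p g + Γ.G.dist g u = Γ.G.dist p u := by
    intro u hup huq
    obtain ⟨m, m1, m2, m3⟩ := Γ.med p g u
    have hmp : Γ.le m p := ModularComplex.down_convex (Γ.G.dist g u) rfl hgp hup m2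
    have hmq : Γ.le m q := ModularComplex.down_convex (Γ.G.dist g u) rfl hgq huq m2
    have hmin := hgmin m ⟨hmp, hmq⟩
    have hmg : Γ.G.dist m g = 0 := by omega
    have : m = g := Γ.dist_zero hmg
    subst this
    omega
  -- g is the maximum of the set of common lower bounds
  have hmax : ∀ u : V, Γ.le u p → Γ.le u q → Γ.le u g := by
    intro u hup huq
    have hg := hgate u hup huq
    refine (ModularComplex.interval_le (Γ.G.dist u g) rfl hup ?_).1
    have c1 := SimpleGraph.dist_comm (G := Γ.G) (u := p) (v := u)
    have c2 := SimpleGraph.dist_comm (G := Γ.G) (u := p) (v := g)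
    have c3 := SimpleGraph.dist_comm (G := Γ.G) (u := g) (v := u)
    omega
  -- x = g
  have hxg : Γ.le x g := hmax x hxp hxq
  have e1 := hgate x hxp hxq
  have e2 : Γ.G.dist x g + Γ.G.dist g q = Γ.G.dist x q := ModularComplex.le_dist_add hxg hgq
  have e3 : Γ.G.dist p q ≤ Γ.G.dist p g + Γ.G.dist g q := Γ.connected.dist_triangle
  have e4 : Γ.G.dist p x + Γ.G.dist x q = Γ.G.dist p q := hsh
  have c1 := SimpleGraph.dist_comm (G := Γ.G) (u := g) (v := x)
  have hgx : Γ.G.dist g x = 0 := by omega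
  have hgxe : g = x := Γ.dist_zero hgx
  subst hgxe
  exact ⟨hxp, hxq, fun y h1 h2 => hmax y h1 h2⟩

/-- The dual modular complex (reverse all orientations). -/
private def ModularComplex.dual (Γ : ModularComplex V) : ModularComplex V where
  G := Γ.G
  connected := Γ.connected
  modular := Γ.modular
  ori x y := Γ.ori y x
  ori_adj h := (Γ.ori_adj h).symm
  ori_total {x y} h := Γ.ori_total h.symm
  acyclic {x y} hxy hyx :=
    Γ.acyclic (Relation.reflTransGen_swap.mp hyx) (Relation.reflTransGen_swap.mp hxy)
  admissible {x1 x2 x3 x4} hc h12 := by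
    obtain ⟨a12, a23, a34, a41, n13, n24⟩ := hc
    exact Γ.admissible (x1 := x2) (x2 := x1) (x3 := x4) (x4 := x3)
      ⟨a12.symm, a41.symm, a34.symm, a23.symm, n24, n13⟩ h12

private lemma ModularComplex.dual_le (Γ : ModularComplex V) {a b : V} :
    (Γ.dual).le a b ↔ Γ.le b a :=
  Relation.reflTransGen_swap

end Auxiliary

/-- In a modular complex, meets and joins are characterized by
shortest subpaths. -/
theorem meet_join_shortest (Γ : ModularComplex V) :
    (∀ p q m : V, Γ.IsMeet p q m → ShortestTriple Γ.G p m q) ∧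
    (∀ p q x : V, Γ.le x p → Γ.le x q → ShortestTriple Γ.G p x q → Γ.IsMeet p q x) ∧
    (∀ p q j : V, Γ.IsJoin p q j → ShortestTriple Γ.G p j q) ∧
    (∀ p q x : V, Γ.le p x → Γ.le q x → ShortestTriple Γ.G p x q → Γ.IsJoin p q x) := by
  refine ⟨fun p q m h => Γ.meet_shortest h,
    fun p q x hxp hxq hsh => Γ.shortest_meet hxp hxq hsh, ?_, ?_⟩
  · intro p q j hj
    apply (Γ.dual).meet_shortest (p := p) (q := q) (m := j)
    exact ⟨(Γ.dual_le).mpr hj.1, (Γ.dual_le).mpr hj.2.1,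
      fun y h1 h2 => (Γ.dual_le).mpr (hj.2.2 y ((Γ.dual_le).mp h1) ((Γ.dual_le).mp h2))⟩
  · intro p q x hpx hqx hsh
    have hm := (Γ.dual).shortest_meet (p := p) (q := q) (x := x)
      ((Γ.dual_le).mpr hpx) ((Γ.dual_le).mpr hqx) hsh
    exact ⟨(Γ.dual_le).mp hm.1, (Γ.dual_le).mp hm.2.1,
      fun y h1 h2 => (Γ.dual_le).mp (hm.2.2 y ((Γ.dual_le).mpr h1) ((Γ.dual_le).mpr h2))⟩

end ZeroExt
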